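/- Let ξ ≥ 0 and let G be holomorphic on the open unit disc {z ∈ ℂ : |z| < 1} with |Im G(z)| ≤ ξ for all |z| < 1 and G(0) ∈ ℝ. Then |Im G(z)| ≤ 8·|z|·ξ for every z with |z| ≤ 1/2. -/

import Mathlib

open Real Metric Set


private lemma aux_trig (s rho t th : ℝ) (hρ : 0 < rho) (ht : 0 < t)
    (hθ0 : 0 ≤ th) (hθπ : th ≤ Real.pi) (hs0 : 0 ≤ s) (hs : s ≤ 1/2)
    (hkey : (rho * Real.cos th) ^ 2 + (rho * Real.sin th - t) ^ 2 ≤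
      s ^ 2 * ((rho * Real.cos th) ^ 2 + (rho * Real.sin th + t) ^ 2)) :
    |th - Real.pi / 2| ≤ Real.pi * s := by
  have hπ := Real.pi_pos
  have hs2 : (0:ℝ) ≤ 1 - s ^ 2 := by nlinarith
  have hc2 : (rho * Real.cos th) ^ 2 = rho ^ 2 - (rho * Real.sin th) ^ 2 := by
    linear_combination rho ^ 2 * Real.sin_sq_add_cos_sq th
  rw [hc2] at hkey
  have hsin : 1 - s ^ 2 ≤ (1 + s ^ 2) * Real.sin th := by
    nlinarith [hkey, mul_pos hρ ht, mul_nonneg hs2 (sq_nonneg (rho - t))]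
  have hsin' : (0:ℝ) ≤ (1 + s ^ 2) * Real.sin th + (1 - s ^ 2) := by linarith
  have hprod : (0:ℝ) ≤ ((1 + s ^ 2) * Real.sin th - (1 - s ^ 2)) *
      ((1 + s ^ 2) * Real.sin th + (1 - s ^ 2)) :=
    mul_nonneg (by linarith) hsin'
  have hcos : (Real.cos th) ^ 2 ≤ 4 * s ^ 2 := by
    nlinarith [hprod, Real.sin_sq_add_cos_sq th, sq_nonneg (s * Real.cos th),
      sq_nonneg (s * s * Real.cos th)]
  have hcos' : |Real.cos th| ≤ 2 * s := by
    nlinarith [sq_abs (Real.cos th), abs_nonneg (Real.cos th)]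
  have habs_sin : Real.sin |th - Real.pi / 2| = |Real.cos th| := by
    rcases le_or_gt (Real.pi / 2) th with h | h
    · rw [abs_of_nonneg (by linarith : (0:ℝ) ≤ th - Real.pi / 2), Real.sin_sub,
        Real.cos_pi_div_two, Real.sin_pi_div_two, abs_of_nonpos
          (Real.cos_nonpos_of_pi_div_two_le_of_le h (by linarith))]
      ring
    · have hcosnn : 0 ≤ Real.cos th :=
        Real.cos_nonneg_of_mem_Icc ⟨by linarith, le_of_lt h⟩
      rw [abs_of_nonpos (by linarith : th - Real.pi / 2 ≤ 0),
        show -(th - Real.pi / 2) = Real.pi / 2 - th by ring,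
        Real.sin_pi_div_two_sub, abs_of_nonneg hcosnn]
  have hφ : |th - Real.pi / 2| ≤ Real.pi / 2 :=
    abs_le.mpr ⟨by linarith, by linarith⟩
  have hmls := Real.mul_le_sin (abs_nonneg (th - Real.pi / 2)) hφ
  rw [habs_sin] at hmls
  have h2 : 2 / Real.pi * |th - Real.pi / 2| ≤ 2 * s := le_trans hmls hcos'
  have h3 := mul_le_mul_of_nonneg_left h2 hπ.le
  have h4 : Real.pi * (2 / Real.pi * |th - Real.pi / 2|) = 2 * |th - Real.pi / 2| := by
    field_simp
  rw [h4] at h3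
  linarith

/-- Let `ξ ≥ 0` and let `G` be holomorphic on the open unit disc with
`|Im G| ≤ ξ` there and `G 0 ∈ ℝ`. Then `|Im G z| ≤ 8⬝|z|⬝ξ` for every `z` with `|z| ≤ 1/2`. -/
theorem im_bound_of_holomorphic_on_disc (ξ : ℝ) (hξ : 0 ≤ ξ) (G : ℂ → ℂ)
    (hG : DifferentiableOn ℂ G (Metric.ball (0 : ℂ) 1))
    (hIm : ∀ z ∈ Metric.ball (0 : ℂ) 1, |(G z).im| ≤ ξ)
    (hG0 : (G 0).im = 0) :
    ∀ z : ℂ, ‖z‖ ≤ 1 / 2 → |(G z).im| ≤ 8 * ‖z‖ * ξ := by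
  intro z hz
  have hzball : z ∈ Metric.ball (0 : ℂ) 1 := by
    rw [mem_ball_zero_iff]; linarith
  have h0ball : (0 : ℂ) ∈ Metric.ball (0 : ℂ) 1 := by
    rw [mem_ball_zero_iff]; norm_num
  rcases eq_or_lt_of_le hξ with h0 | hξpos
  · -- ξ = 0 case: |Im G z| ≤ ξ = 0
    have h1 := hIm z hzball
    have hnn : 0 ≤ 8 * ‖z‖ * ξ := by positivity
    nlinarith [abs_nonneg (G z).im]
  -- Main case: ξ > 0
  set c : ℝ := π / (2 * ξ) with hc_def
  have hπ := Real.pi_pos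
  have hc : 0 < c := by positivity
  have hcξ : c * ξ = π / 2 := by rw [hc_def]; field_simp
  set t : ℝ := Real.exp (c * (G 0).re) with ht_def
  have ht : 0 < t := Real.exp_pos _
  set u : ℂ → ℂ := fun w => Complex.exp ((c : ℂ) * (G w + Complex.I * (ξ : ℂ))) with hu_def
  have hure : ∀ w, (u w).re = Real.exp (c * (G w).re) * Real.cos (c * ((G w).im + ξ)) := by
    intro w
    rw [hu_def]
    simp only [Complex.exp_re, Complex.mul_re, Complex.mul_im, Complex.add_re, Complex.add_im,
      Complex.I_re, Complex.I_im, Complex.ofReal_re, Complex.ofReal_im]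
    ring_nf
  have huim : ∀ w, (u w).im = Real.exp (c * (G w).re) * Real.sin (c * ((G w).im + ξ)) := by
    intro w
    rw [hu_def]
    simp only [Complex.exp_im, Complex.mul_re, Complex.mul_im, Complex.add_re, Complex.add_im,
      Complex.I_re, Complex.I_im, Complex.ofReal_re, Complex.ofReal_im]
    ring_nf
  -- θ bounds for points in the ball
  have hθ : ∀ w ∈ Metric.ball (0 : ℂ) 1,
      0 ≤ c * ((G w).im + ξ) ∧ c * ((G w).im + ξ) ≤ π := by
    intro w hw
    have h1 := abs_le.mp (hIm w hw)
    constructor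
    · nlinarith [h1.1]
    · nlinarith [h1.2]
  -- imaginary part of u is nonnegative on the ball
  have huim_nonneg : ∀ w ∈ Metric.ball (0 : ℂ) 1, 0 ≤ (u w).im := by
    intro w hw
    rw [huim w]
    have := hθ w hw
    exact mul_nonneg (Real.exp_pos _).le (Real.sin_nonneg_of_nonneg_of_le_pi this.1 this.2)
  -- denominator never vanishes on the ball
  have hden : ∀ w ∈ Metric.ball (0 : ℂ) 1, u w + (t : ℂ) * Complex.I ≠ 0 := by
    intro w hw h
    have him : (u w + (t : ℂ) * Complex.I).im = (u w).im + t := by simp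
    rw [h] at him
    simp at him
    have := huim_nonneg w hw
    linarith
  set f : ℂ → ℂ := fun w => (u w - (t : ℂ) * Complex.I) / (u w + (t : ℂ) * Complex.I) with hf_def
  -- f 0 = 0
  have hu0 : u 0 = (t : ℂ) * Complex.I := by
    apply Complex.ext
    · rw [hure 0]
      rw [hG0]
      simp only [zero_add, hcξ, Real.cos_pi_div_two]
      simp
    · rw [huim 0, hG0, zero_add, hcξ, Real.sin_pi_div_two, mul_one]
      simp only [Complex.mul_im, Complex.ofReal_re, Complex.ofReal_im, Complex.I_re,
        Complex.I_im]
      ring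
  have hf0 : f 0 = 0 := by
    rw [hf_def]
    simp [hu0]
  -- |f w| ≤ 1 on the ball
  have hfle : ∀ w ∈ Metric.ball (0 : ℂ) 1, ‖f w‖ ≤ 1 := by
    intro w hw
    rw [hf_def]
    rw [norm_div]
    rw [div_le_one (norm_pos_iff.mpr (hden w hw))]
    have hsq : Complex.normSq (u w - (t : ℂ) * Complex.I) ≤
        Complex.normSq (u w + (t : ℂ) * Complex.I) := by
      simp only [Complex.normSq_apply, Complex.sub_re, Complex.sub_im, Complex.add_re,
        Complex.add_im, Complex.mul_re, Complex.mul_im, Complex.I_re, Complex.I_im,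
        Complex.ofReal_re, Complex.ofReal_im]
      have := huim_nonneg w hw
      nlinarith
    rw [Complex.norm_def, Complex.norm_def]
    exact Real.sqrt_le_sqrt hsq
  -- differentiability of f
  have hu_diff : DifferentiableOn ℂ u (Metric.ball (0:ℂ) 1) := by
    apply DifferentiableOn.cexp
    exact DifferentiableOn.const_mul (hG.add (differentiableOn_const _)) _
  have hf_diff : DifferentiableOn ℂ f (Metric.ball (0:ℂ) 1) :=
    (hu_diff.sub (differentiableOn_const _)).div
      (hu_diff.add (differentiableOn_const _)) hden
  -- Schwarz lemma with an epsilon margin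
  have hfz : ‖f z‖ ≤ ‖z‖ := by
    refine le_of_forall_pos_le_add fun ε hε => ?_
    have hmaps : Set.MapsTo f (Metric.ball (0:ℂ) 1) (Metric.closedBall (f 0) (1 + ε)) := by
      intro w hw
      rw [Metric.mem_closedBall, hf0, dist_zero_right]
      calc ‖f w‖ ≤ 1 := hfle w hw
        _ ≤ 1 + ε := by linarith
    have hsch := Complex.dist_le_div_mul_dist_of_mapsTo_ball hf_diff hmaps hzball
    rw [hf0, dist_zero_right, dist_zero_right] at hsch
    have hz0 : (0:ℝ) ≤ ‖z‖ := norm_nonneg z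
    calc ‖f z‖ = ‖f z‖ := rfl
      _ ≤ (1 + ε) / 1 * ‖z‖ := hsch
      _ = ‖z‖ + ε * ‖z‖ := by ring
      _ ≤ ‖z‖ + ε := by nlinarith
  -- turn into a normSq inequality
  have habs : ‖u z - (t:ℂ) * Complex.I‖ ≤
      ‖z‖ * ‖u z + (t:ℂ) * Complex.I‖ := by
    have h := hfz
    rw [hf_def] at h
    rw [norm_div] at h
    rwa [div_le_iff₀ (norm_pos_iff.mpr (hden z hzball))] at h
  have hsq2 : Complex.normSq (u z - (t:ℂ) * Complex.I) ≤
      ‖z‖ ^ 2 * Complex.normSq (u z + (t:ℂ) * Complex.I) := by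
    rw [← Complex.sq_norm, ← Complex.sq_norm]
    calc (‖u z - (t:ℂ) * Complex.I‖) ^ 2
        ≤ (‖z‖ * ‖u z + (t:ℂ) * Complex.I‖) ^ 2 :=
          pow_le_pow_left₀ (norm_nonneg _) habs 2
      _ = ‖z‖ ^ 2 * (‖u z + (t:ℂ) * Complex.I‖) ^ 2 := by ring
  -- extract the real inequality and apply the trig lemma
  have hρ : (0:ℝ) < Real.exp (c * (G z).re) := Real.exp_pos _
  have hkey : (Real.exp (c * (G z).re) * Real.cos (c * ((G z).im + ξ))) ^ 2 +
      (Real.exp (c * (G z).re) * Real.sin (c * ((G z).im + ξ)) - t) ^ 2 ≤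
      ‖z‖ ^ 2 * ((Real.exp (c * (G z).re) * Real.cos (c * ((G z).im + ξ))) ^ 2 +
        (Real.exp (c * (G z).re) * Real.sin (c * ((G z).im + ξ)) + t) ^ 2) := by
    have h2 := hsq2
    simp only [Complex.normSq_apply, Complex.sub_re, Complex.sub_im, Complex.add_re,
      Complex.add_im, Complex.mul_re, Complex.mul_im, Complex.I_re, Complex.I_im,
      Complex.ofReal_re, Complex.ofReal_im, hure z, huim z] at h2
    ring_nf at h2 ⊢
    linarith
  have hθz := hθ z hzball
  have haux := aux_trig ‖z‖ (Real.exp (c * (G z).re)) t (c * ((G z).im + ξ))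
    hρ ht hθz.1 hθz.2 (norm_nonneg z) hz hkey
  -- conclude
  have hcy : c * ((G z).im + ξ) - Real.pi / 2 = c * (G z).im := by
    have : c * ((G z).im + ξ) = c * (G z).im + c * ξ := by ring
    rw [this, hcξ]; ring
  rw [hcy] at haux
  rw [abs_mul, abs_of_pos hc] at haux
  -- haux : c * |(G z).im| ≤ π * ‖z‖
  have hcval : c * (8 * ‖z‖ * ξ) = 4 * (Real.pi * ‖z‖) := by
    rw [hc_def]; field_simp; ring
  have hπz : 0 ≤ Real.pi * ‖z‖ := by positivity
  have : c * |(G z).im| ≤ c * (8 * ‖z‖ * ξ) := by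
    rw [hcval]; linarith
  exact le_of_mul_le_mul_left this hc
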